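/- Let n > m ≥ 2 be integers, let A_1, …, A_{m−1} be a skew Clifford system on ℝ^{n+1}, set c = (m−1)/(n−1) and F(x,y) = ⟨x,y⟩² + Σ_{q=1}^{m−1} ⟨A_q x, y⟩². Suppose ‖x‖ = ‖y‖ = 1 and F(x,y) = c, and write B_p = ⟨A_p x, y⟩. Define Y = (⟨x,y⟩y + Σ_p B_p A_pᵀ y − c x, ⟨x,y⟩x + Σ_p B_p A_p x − c y) ∈ ℝ^{n+1} × ℝ^{n+1}. Then ‖Y‖² = 2c(1−c), and Y is orthogonal to both (x,y) and (x,−y). -/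

import Mathlib

open Matrix
open scoped RealInnerProductSpace BigOperators

noncomputable section

/-- A skew Clifford system `A_1, …, A_{m-1}` on `ℝ^N`: skew-symmetric matrices with
`A_p A_q + A_q A_p = -2 δ_{pq} Id`. -/
def IsSkewCliffordSystem {N m : ℕ} (A : Fin (m - 1) → Matrix (Fin N) (Fin N) ℝ) : Prop :=
  (∀ p q, A p * A q + A q * A p =
      if p = q then (-2 : ℝ) • (1 : Matrix (Fin N) (Fin N) ℝ) else 0) ∧
  (∀ p, (A p)ᵀ = -A p)

/-- The action of a matrix on Euclidean space. -/
def act {N : ℕ} (A : Matrix (Fin N) (Fin N) ℝ) (x : EuclideanSpace ℝ (Fin N)) :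
    EuclideanSpace ℝ (Fin N) :=
  Matrix.toEuclideanLin A x

/-- The splitting form of the FKM isoparametric polynomial:
`F(x,y) = ⟨x,y⟩² + Σ_q ⟨A_q x, y⟩²`. -/
def FKM {N m : ℕ} (A : Fin (m - 1) → Matrix (Fin N) (Fin N) ℝ)
    (x y : EuclideanSpace ℝ (Fin N)) : ℝ :=
  ⟪x, y⟫ ^ 2 + ∑ q, ⟪act (A q) x, y⟫ ^ 2

section Aux
variable {N : ℕ}

lemma act_apply' (A : Matrix (Fin N) (Fin N) ℝ) (x : EuclideanSpace ℝ (Fin N)) (i : Fin N) :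
    act A x i = ∑ j, A i j * x j := rfl

lemma inner_act_left (A : Matrix (Fin N) (Fin N) ℝ) (x z : EuclideanSpace ℝ (Fin N)) :
    ⟪act A x, z⟫ = ⟪x, act Aᵀ z⟫ := by
  simp only [PiLp.inner_apply, RCLike.inner_apply, starRingEnd_apply, star_trivial,
    act_apply', Matrix.transpose_apply, Finset.sum_mul, Finset.mul_sum]
  rw [Finset.sum_comm]
  congr 1; ext i; congr 1; ext j; ring

lemma act_act (A B : Matrix (Fin N) (Fin N) ℝ) (x : EuclideanSpace ℝ (Fin N)) :
    act A (act B x) = act (A * B) x := by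
  simp [act, Matrix.toEuclideanLin_apply, Matrix.mulVec_mulVec]

lemma act_add (A B : Matrix (Fin N) (Fin N) ℝ) (x : EuclideanSpace ℝ (Fin N)) :
    act (A + B) x = act A x + act B x := by simp [act]

lemma act_neg (A : Matrix (Fin N) (Fin N) ℝ) (x : EuclideanSpace ℝ (Fin N)) :
    act (-A) x = -act A x := by simp [act]

lemma act_smul (r : ℝ) (A : Matrix (Fin N) (Fin N) ℝ) (x : EuclideanSpace ℝ (Fin N)) :
    act (r • A) x = r • act A x := by simp [act]

lemma act_one (x : EuclideanSpace ℝ (Fin N)) : act (1 : Matrix (Fin N) (Fin N) ℝ) x = x := by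
  simp [act, Matrix.toEuclideanLin_apply]

lemma act_zero (x : EuclideanSpace ℝ (Fin N)) : act (0 : Matrix (Fin N) (Fin N) ℝ) x = 0 := by
  simp [act]

end Aux


lemma inner_sum_sum {N k : ℕ} (f : Fin k → ℝ) (g : Fin k → EuclideanSpace ℝ (Fin N))
    (hg : ∀ p q, ⟪g p, g q⟫ = if p = q then 1 else 0) :
    ⟪∑ p, f p • g p, ∑ q, f q • g q⟫ = ∑ p, f p ^ 2 := by
  rw [sum_inner]
  simp only [inner_sum, real_inner_smul_left, real_inner_smul_right, hg, mul_ite, mul_one,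
    mul_zero, Finset.sum_ite_eq, Finset.sum_ite_eq', Finset.mem_univ, if_true]
  simp [sq]

set_option maxHeartbeats 800000 in
/-- with `c = (m−1)/(n−1)`, `‖x‖ = ‖y‖ = 1`, `F(x,y) = c`, `B_p = ⟨A_p x, y⟩`
and `Y = (⟨x,y⟩y + Σ_p B_p A_pᵀ y − c x, ⟨x,y⟩x + Σ_p B_p A_p x − c y)`, one has
`‖Y‖² = 2c(1−c)` and `Y ⟂ (x,y)`, `Y ⟂ (x,−y)` (in `ℝ^{n+1} × ℝ^{n+1}` with the
Euclidean product metric). -/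
theorem stmt8 (n m : ℕ) (hm : 2 ≤ m) (hmn : m < n)
    (A : Fin (m - 1) → Matrix (Fin (n + 1)) (Fin (n + 1)) ℝ)
    (hA : IsSkewCliffordSystem A)
    (c : ℝ) (hc : c = ((m : ℝ) - 1) / ((n : ℝ) - 1))
    (x y : EuclideanSpace ℝ (Fin (n + 1))) (hx : ‖x‖ = 1) (hy : ‖y‖ = 1)
    (hF : FKM A x y = c)
    (Y : WithLp 2 (EuclideanSpace ℝ (Fin (n + 1)) × EuclideanSpace ℝ (Fin (n + 1))))
    (hY : Y = (WithLp.equiv 2 _).symm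
      (⟪x, y⟫ • y + (∑ p, ⟪act (A p) x, y⟫ • act (A p)ᵀ y) - c • x,
       ⟪x, y⟫ • x + (∑ p, ⟪act (A p) x, y⟫ • act (A p) x) - c • y)) :
    ‖Y‖ ^ 2 = 2 * c * (1 - c) ∧
    ⟪Y, (WithLp.equiv 2 _).symm (x, y)⟫ = 0 ∧
    ⟪Y, (WithLp.equiv 2 _).symm (x, -y)⟫ = 0 := by
  obtain ⟨hA1, hA2⟩ := hA
  have hxx : ⟪x, x⟫ = 1 := by rw [real_inner_self_eq_norm_sq, hx]; norm_num
  have hyy : ⟪y, y⟫ = 1 := by rw [real_inner_self_eq_norm_sq, hy]; norm_num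
  have hskew : ∀ p (z : EuclideanSpace ℝ (Fin (n+1))), ⟪act (A p) z, z⟫ = 0 := by
    intro p z
    have h := inner_act_left (A p) z z
    rw [hA2, act_neg, inner_neg_right] at h
    have h2 : ⟪z, act (A p) z⟫ = ⟪act (A p) z, z⟫ := real_inner_comm _ _
    linarith
  have hpair : ∀ p q (z : EuclideanSpace ℝ (Fin (n+1))), ⟪z, z⟫ = 1 →
      ⟪act (A p) z, act (A q) z⟫ = if p = q then 1 else 0 := by
    intro p q z hz
    have h1 : ⟪act (A p) z, act (A q) z⟫ = -⟪z, act (A p * A q) z⟫ := by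
      rw [inner_act_left, hA2, act_neg, inner_neg_right, act_act]
    have h2 : ⟪act (A q) z, act (A p) z⟫ = -⟪z, act (A q * A p) z⟫ := by
      rw [inner_act_left, hA2, act_neg, inner_neg_right, act_act]
    have h3 : ⟪act (A p) z, act (A q) z⟫ = ⟪act (A q) z, act (A p) z⟫ := real_inner_comm _ _
    have h4 : act (A p * A q) z + act (A q * A p) z
        = act (if p = q then (-2:ℝ) • (1 : Matrix (Fin (n+1)) (Fin (n+1)) ℝ) else 0) z := by
      rw [← act_add, hA1]
    by_cases hpq : p = q
    · subst hpq
      rw [if_pos rfl, act_smul, act_one] at h4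
      have h5 : ⟪z, act (A p * A p) z⟫ + ⟪z, act (A p * A p) z⟫ = ⟪z, (-2:ℝ) • z⟫ := by
        rw [← inner_add_right, h4]
      rw [real_inner_smul_right, hz] at h5
      rw [if_pos rfl]
      linarith
    · rw [if_neg hpq, act_zero] at h4
      have h5 : ⟪z, act (A p * A q) z⟫ + ⟪z, act (A q * A p) z⟫ = 0 := by
        rw [← inner_add_right, h4, inner_zero_right]
      rw [if_neg hpq]
      linarith
  have hvv : ∀ p q, ⟪act (A p) x, act (A q) x⟫ = if p = q then 1 else 0 :=
    fun p q => hpair p q x hxx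
  have hww : ∀ p q, ⟪act (A p) y, act (A q) y⟫ = if p = q then 1 else 0 :=
    fun p q => hpair p q y hyy
  have hvx : ∀ p, ⟪act (A p) x, x⟫ = 0 := fun p => hskew p x
  have hvx' : ∀ p, ⟪x, act (A p) x⟫ = 0 := fun p => by rw [real_inner_comm]; exact hvx p
  have hwy : ∀ p, ⟪act (A p) y, y⟫ = 0 := fun p => hskew p y
  have hwy' : ∀ p, ⟪y, act (A p) y⟫ = 0 := fun p => by rw [real_inner_comm]; exact hwy p
  have hwx : ∀ p, ⟪act (A p) y, x⟫ = -⟪act (A p) x, y⟫ := by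
    intro p
    have h := inner_act_left (A p) x y
    rw [hA2, act_neg, inner_neg_right] at h
    rw [real_inner_comm]
    linarith
  have hwx' : ∀ p, ⟪x, act (A p) y⟫ = -⟪act (A p) x, y⟫ := fun p => by
    rw [real_inner_comm]; exact hwx p
  have hvy' : ∀ p, ⟪y, act (A p) x⟫ = ⟪act (A p) x, y⟫ := fun p => real_inner_comm _ _
  have hyx : ⟪y, x⟫ = ⟪x, y⟫ := real_inner_comm _ _
  have hc' : ⟪x, y⟫ ^ 2 + ∑ p, ⟪act (A p) x, y⟫ ^ 2 = c := hF
  have hc'' : ∑ p, ⟪act (A p) x, y⟫ ^ 2 = c - ⟪x, y⟫ ^ 2 := by linarith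
  have hT1 : (∑ p, ⟪act (A p) x, y⟫ • act (A p)ᵀ y)
      = -∑ p, ⟪act (A p) x, y⟫ • act (A p) y := by
    rw [← Finset.sum_neg_distrib]
    refine Finset.sum_congr rfl fun p _ => ?_
    rw [hA2, act_neg, smul_neg]
  set W : EuclideanSpace ℝ (Fin (n+1)) := ∑ p, ⟪act (A p) x, y⟫ • act (A p) y with hWdef
  set V : EuclideanSpace ℝ (Fin (n+1)) := ∑ p, ⟪act (A p) x, y⟫ • act (A p) x with hVdef
  have hWy : ⟪W, y⟫ = 0 := by
    rw [hWdef, sum_inner]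
    simp only [real_inner_smul_left, hwy, mul_zero, Finset.sum_const_zero]
  have hWy' : ⟪y, W⟫ = 0 := by rw [real_inner_comm]; exact hWy
  have hWx : ⟪W, x⟫ = -(c - ⟪x, y⟫ ^ 2) := by
    rw [hWdef, sum_inner, ← hc'', ← Finset.sum_neg_distrib]
    refine Finset.sum_congr rfl fun p _ => ?_
    rw [real_inner_smul_left, hwx p, sq]; ring
  have hWx' : ⟪x, W⟫ = -(c - ⟪x, y⟫ ^ 2) := by rw [real_inner_comm]; exact hWx
  have hWW : ⟪W, W⟫ = c - ⟪x, y⟫ ^ 2 := by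
    rw [hWdef, inner_sum_sum _ _ hww, hc'']
  have hVx : ⟪V, x⟫ = 0 := by
    rw [hVdef, sum_inner]
    simp only [real_inner_smul_left, hvx, mul_zero, Finset.sum_const_zero]
  have hVx' : ⟪x, V⟫ = 0 := by rw [real_inner_comm]; exact hVx
  have hVy : ⟪V, y⟫ = c - ⟪x, y⟫ ^ 2 := by
    rw [hVdef, sum_inner, ← hc'']
    refine Finset.sum_congr rfl fun p _ => ?_
    rw [real_inner_smul_left, sq]
  have hVy' : ⟪y, V⟫ = c - ⟪x, y⟫ ^ 2 := by rw [real_inner_comm]; exact hVy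
  have hVV : ⟪V, V⟫ = c - ⟪x, y⟫ ^ 2 := by
    rw [hVdef, inner_sum_sum _ _ hvv, hc'']
  have hY1eq : (⟪x, y⟫ • y + (∑ p, ⟪act (A p) x, y⟫ • act (A p)ᵀ y) - c • x : EuclideanSpace ℝ (Fin (n+1)))
      = ⟪x, y⟫ • y + -W - c • x := by rw [hT1, hWdef]
  have hY1x : ⟪(⟪x, y⟫ • y + -W - c • x : EuclideanSpace ℝ (Fin (n+1))), x⟫ = 0 := by
    simp only [inner_sub_left, inner_add_left, inner_neg_left, real_inner_smul_left, hyx,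
      hxx, hWx]
    ring
  have hY2x : ⟪(⟪x, y⟫ • x + V - c • y : EuclideanSpace ℝ (Fin (n+1))), y⟫ = 0 := by
    simp only [inner_sub_left, inner_add_left, real_inner_smul_left, hyy, hVy]
    ring
  have hY1Y1 : ⟪(⟪x, y⟫ • y + -W - c • x : EuclideanSpace ℝ (Fin (n+1))),
      (⟪x, y⟫ • y + -W - c • x : EuclideanSpace ℝ (Fin (n+1)))⟫ = c - c ^ 2 := by
    simp only [inner_sub_left, inner_sub_right, inner_add_left, inner_add_right, inner_neg_left,
      inner_neg_right, real_inner_smul_left, real_inner_smul_right, hyx, hxx, hyy, hWy, hWy',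
      hWx, hWx', hWW]
    ring
  have hY2Y2 : ⟪(⟪x, y⟫ • x + V - c • y : EuclideanSpace ℝ (Fin (n+1))),
      (⟪x, y⟫ • x + V - c • y : EuclideanSpace ℝ (Fin (n+1)))⟫ = c - c ^ 2 := by
    simp only [inner_sub_left, inner_sub_right, inner_add_left, inner_add_right,
      real_inner_smul_left, real_inner_smul_right, hyx, hxx, hyy, hVx, hVx', hVy, hVy', hVV]
    ring
  rw [hY1eq] at hY
  rw [show (⟪x, y⟫ • x + (∑ p, ⟪act (A p) x, y⟫ • act (A p) x) - c • y : EuclideanSpace ℝ (Fin (n+1)))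
      = ⟪x, y⟫ • x + V - c • y from by rw [hVdef]] at hY
  refine ⟨?_, ?_, ?_⟩
  · have h := real_inner_self_eq_norm_sq Y
    rw [hY, WithLp.prod_inner_apply, WithLp.equiv_symm_apply, WithLp.ofLp_toLp,
      hY1Y1, hY2Y2] at h
    rw [hY, WithLp.equiv_symm_apply]
    linarith [h]
  · rw [hY, WithLp.prod_inner_apply, WithLp.equiv_symm_apply, WithLp.ofLp_toLp,
      WithLp.ofLp_toLp, hY1x, hY2x]
    ring
  · rw [hY, WithLp.prod_inner_apply, WithLp.equiv_symm_apply, WithLp.ofLp_toLp,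
      WithLp.ofLp_toLp, inner_neg_right, hY1x, hY2x]
    ring
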